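/- (Skew-symmetry of the advection junction system matrix in the SBP norm) Suppose that in the SBP-FD junction semi-discretization of the advection equation the operators I_w^w, I_u^u, I_v^v are identity matrices, the interpolation compatibility relation holds (I^{w,u} = P_{x,w}^{-1}(I_w^u)^T P_{x,u} and I^{w,v} = P_{x,w}^{-1}(I_w^v)^T P_{x,v}), and τ_w = -a_2/2, τ_{uv} = a_2/2. Let L be the system matrix of the semi-discretization acting on stacked vectors z = (w; u; v), i.e. the block matrix with diagonal blocks L_{ww} = a_1 D_{x,w}⊗I_{y,w} + a_2 I_{x,w}⊗D_{y,w} − τ_w I_{x,w}⊗(P_{y,w}^{-1} e_{0,w} e_{0,w}^T), L_{uu} = a_1 D_{x,u}⊗I_{y,u} + a_2 I_{x,u}⊗D_{y,u} − τ_{uv} I_{x,u}⊗(P_{y,u}^{-1} e_{N,u} e_{N,u}^T), L_{vv} = a_1 D_{x,v}⊗I_{y,v} + a_2 I_{x,v}⊗D_{y,v} − τ_{uv} I_{x,v}⊗(P_{y,v}^{-1} e_{N,v} e_{N,v}^T), off-diagonal blocks L_{wu} = τ_w I^{w,u}⊗(P_{y,w}^{-1} e_{0,w} e_{N,u}^T),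 L_{wv} = τ_w I^{w,v}⊗(P_{y,w}^{-1} e_{0,w} e_{N,v}^T), L_{uw} = τ_{uv} I_w^u⊗(P_{y,u}^{-1} e_{N,u} e_{0,w}^T), L_{vw} = τ_{uv} I_w^v⊗(P_{y,v}^{-1} e_{N,v} e_{0,w}^T), and L_{uv} = L_{vu} = 0. Let 𝒫 be the block-diagonal matrix with blocks P_{x,w}⊗P_{y,w}, P_{x,u}⊗P_{y,u}, P_{x,v}⊗P_{y,v}. Then 𝒫L + L^T𝒫 = 0; in particular L is skew-symmetric with respect to the inner product induced by 𝒫. -/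

import Mathlib

open Matrix
open scoped Kronecker

noncomputable section

/-- The first standard basis vector `e₀ = (1,0,…,0)ᵀ` of `ℝ^(l+1)`. -/
def e0v (l : ℕ) : Fin (l + 1) → ℝ := Pi.single 0 1

/-- The last standard basis vector `e_N = (0,…,0,1)ᵀ` of `ℝ^(l+1)`. -/
def eNv (l : ℕ) : Fin (l + 1) → ℝ := Pi.single (Fin.last l) 1

private lemma vecMulVec_transpose' {m n : Type*} (a : m → ℝ) (b : n → ℝ) :
    (vecMulVec a b)ᵀ = vecMulVec b a := by
  ext i j
  simp [vecMulVec, mul_comm]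

private lemma kron_transpose' {l m n p : Type*} (A : Matrix l m ℝ) (B : Matrix n p ℝ) :
    (A ⊗ₖ B)ᵀ = Aᵀ ⊗ₖ Bᵀ :=
  (kroneckerMap_transpose _ _ _).symm

private lemma kron_neg' {l m n p : Type*} (A : Matrix l m ℝ) (B : Matrix n p ℝ) :
    A ⊗ₖ (-B) = -(A ⊗ₖ B) := by
  ext i j
  simp [mul_neg]

private lemma fromColumns_add' {m n₁ n₂ : Type*} (A C : Matrix m n₁ ℝ) (B D : Matrix m n₂ ℝ) :
    fromCols A B + fromCols C D = fromCols (A + C) (B + D) := by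
  ext i (j | j) <;> simp [fromCols_apply_inl, fromCols_apply_inr]

private lemma fromRows_add' {m₁ m₂ n : Type*} (A C : Matrix m₁ n ℝ) (B D : Matrix m₂ n ℝ) :
    fromRows A B + fromRows C D = fromRows (A + C) (B + D) := by
  ext (i | i) j <;> simp [fromRows_apply_inl, fromRows_apply_inr]

set_option maxHeartbeats 1000000 in
/-- (Skew-symmetry of the advection junction system matrix in the SBP norm.)
With identity operators `I_w^w, I_u^u, I_v^v`, the interpolation compatibility relation,
and penalty parameters `τ_w = -a₂/2`, `τ_{uv} = a₂/2`, the system matrix `L` of the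
SBP-FD junction semi-discretization of the advection equation satisfies
`𝒫 L + Lᵀ 𝒫 = 0`, where `𝒫` is the block-diagonal SBP norm matrix. -/
theorem sbp_fd_junction_advection_skew_symmetry
    (kw lw ku lu kv lv : ℕ) (a1 a2 : ℝ)
    (Pxw : Matrix (Fin (kw + 1)) (Fin (kw + 1)) ℝ)
    (Pyw : Matrix (Fin (lw + 1)) (Fin (lw + 1)) ℝ)
    (Pxu : Matrix (Fin (ku + 1)) (Fin (ku + 1)) ℝ)
    (Pyu : Matrix (Fin (lu + 1)) (Fin (lu + 1)) ℝ)
    (Pxv : Matrix (Fin (kv + 1)) (Fin (kv + 1)) ℝ)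
    (Pyv : Matrix (Fin (lv + 1)) (Fin (lv + 1)) ℝ)
    (hPxw : Pxw.IsDiag) (hPxwP : Pxw.PosDef)
    (hPyw : Pyw.IsDiag) (hPywP : Pyw.PosDef)
    (hPxu : Pxu.IsDiag) (hPxuP : Pxu.PosDef)
    (hPyu : Pyu.IsDiag) (hPyuP : Pyu.PosDef)
    (hPxv : Pxv.IsDiag) (hPxvP : Pxv.PosDef)
    (hPyv : Pyv.IsDiag) (hPyvP : Pyv.PosDef)
    (Qxw : Matrix (Fin (kw + 1)) (Fin (kw + 1)) ℝ)
    (Qyw : Matrix (Fin (lw + 1)) (Fin (lw + 1)) ℝ)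
    (Qxu : Matrix (Fin (ku + 1)) (Fin (ku + 1)) ℝ)
    (Qyu : Matrix (Fin (lu + 1)) (Fin (lu + 1)) ℝ)
    (Qxv : Matrix (Fin (kv + 1)) (Fin (kv + 1)) ℝ)
    (Qyv : Matrix (Fin (lv + 1)) (Fin (lv + 1)) ℝ)
    (hQxw : Qxw + Qxwᵀ = 0) (hQxu : Qxu + Qxuᵀ = 0) (hQxv : Qxv + Qxvᵀ = 0)
    (hQyw : Qyw + Qywᵀ = -vecMulVec (e0v lw) (e0v lw))
    (hQyu : Qyu + Qyuᵀ = vecMulVec (eNv lu) (eNv lu))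
    (hQyv : Qyv + Qyvᵀ = vecMulVec (eNv lv) (eNv lv))
    (Iwu : Matrix (Fin (ku + 1)) (Fin (kw + 1)) ℝ)
    (Iwv : Matrix (Fin (kv + 1)) (Fin (kw + 1)) ℝ)
    (Iwu' : Matrix (Fin (kw + 1)) (Fin (ku + 1)) ℝ)
    (Iwv' : Matrix (Fin (kw + 1)) (Fin (kv + 1)) ℝ)
    (hIwu' : Iwu' = Pxw⁻¹ * Iwuᵀ * Pxu)
    (hIwv' : Iwv' = Pxw⁻¹ * Iwvᵀ * Pxv)
    (τw τuv : ℝ) (hτw : τw = -a2 / 2) (hτuv : τuv = a2 / 2) :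
    let Lww := a1 • ((Pxw⁻¹ * Qxw) ⊗ₖ (1 : Matrix (Fin (lw + 1)) (Fin (lw + 1)) ℝ))
      + a2 • ((1 : Matrix (Fin (kw + 1)) (Fin (kw + 1)) ℝ) ⊗ₖ (Pyw⁻¹ * Qyw))
      - τw • ((1 : Matrix (Fin (kw + 1)) (Fin (kw + 1)) ℝ)
          ⊗ₖ (Pyw⁻¹ * vecMulVec (e0v lw) (e0v lw)))
    let Luu := a1 • ((Pxu⁻¹ * Qxu) ⊗ₖ (1 : Matrix (Fin (lu + 1)) (Fin (lu + 1)) ℝ))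
      + a2 • ((1 : Matrix (Fin (ku + 1)) (Fin (ku + 1)) ℝ) ⊗ₖ (Pyu⁻¹ * Qyu))
      - τuv • ((1 : Matrix (Fin (ku + 1)) (Fin (ku + 1)) ℝ)
          ⊗ₖ (Pyu⁻¹ * vecMulVec (eNv lu) (eNv lu)))
    let Lvv := a1 • ((Pxv⁻¹ * Qxv) ⊗ₖ (1 : Matrix (Fin (lv + 1)) (Fin (lv + 1)) ℝ))
      + a2 • ((1 : Matrix (Fin (kv + 1)) (Fin (kv + 1)) ℝ) ⊗ₖ (Pyv⁻¹ * Qyv))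
      - τuv • ((1 : Matrix (Fin (kv + 1)) (Fin (kv + 1)) ℝ)
          ⊗ₖ (Pyv⁻¹ * vecMulVec (eNv lv) (eNv lv)))
    let Lwu := τw • (Iwu' ⊗ₖ (Pyw⁻¹ * vecMulVec (e0v lw) (eNv lu)))
    let Lwv := τw • (Iwv' ⊗ₖ (Pyw⁻¹ * vecMulVec (e0v lw) (eNv lv)))
    let Luw := τuv • (Iwu ⊗ₖ (Pyu⁻¹ * vecMulVec (eNv lu) (e0v lw)))
    let Lvw := τuv • (Iwv ⊗ₖ (Pyv⁻¹ * vecMulVec (eNv lv) (e0v lw)))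
    let L := Matrix.fromBlocks Lww (Matrix.fromCols Lwu Lwv)
      (Matrix.fromRows Luw Lvw) (Matrix.fromBlocks Luu 0 0 Lvv)
    let P := Matrix.fromBlocks (Pxw ⊗ₖ Pyw) 0 0
      (Matrix.fromBlocks (Pxu ⊗ₖ Pyu) 0 0 (Pxv ⊗ₖ Pyv))
    P * L + Lᵀ * P = 0 := by
  intro Lww Luu Lvv Lwu Lwv Luw Lvw L P
  have hxw : Pxw * Pxw⁻¹ = 1 := mul_nonsing_inv _ (isUnit_iff_ne_zero.mpr hPxwP.det_pos.ne')
  have hyw : Pyw * Pyw⁻¹ = 1 := mul_nonsing_inv _ (isUnit_iff_ne_zero.mpr hPywP.det_pos.ne')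
  have hxu : Pxu * Pxu⁻¹ = 1 := mul_nonsing_inv _ (isUnit_iff_ne_zero.mpr hPxuP.det_pos.ne')
  have hyu : Pyu * Pyu⁻¹ = 1 := mul_nonsing_inv _ (isUnit_iff_ne_zero.mpr hPyuP.det_pos.ne')
  have hxv : Pxv * Pxv⁻¹ = 1 := mul_nonsing_inv _ (isUnit_iff_ne_zero.mpr hPxvP.det_pos.ne')
  have hyv : Pyv * Pyv⁻¹ = 1 := mul_nonsing_inv _ (isUnit_iff_ne_zero.mpr hPyvP.det_pos.ne')
  have sxw : Pxwᵀ = Pxw := hPxw.isSymm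
  have syw : Pywᵀ = Pyw := hPyw.isSymm
  have sxu : Pxuᵀ = Pxu := hPxu.isSymm
  have syu : Pyuᵀ = Pyu := hPyu.isSymm
  have sxv : Pxvᵀ = Pxv := hPxv.isSymm
  have syv : Pyvᵀ = Pyv := hPyv.isSymm
  have hPT : Pᵀ = P := by
    simp only [P, fromBlocks_transpose, transpose_zero, kron_transpose', sxw, syw, sxu, syu,
      sxv, syv]
  have hLTP : Lᵀ * P = (P * L)ᵀ := by rw [← hPT, ← transpose_mul, hPT]
  -- diagonal blocks of P * L
  have hMww : (Pxw ⊗ₖ Pyw) * Lww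
      = a1 • (Qxw ⊗ₖ Pyw) + a2 • (Pxw ⊗ₖ Qyw) - τw • (Pxw ⊗ₖ vecMulVec (e0v lw) (e0v lw)) := by
    simp only [Lww, mul_add, mul_sub, Matrix.mul_smul, ← mul_kronecker_mul, Matrix.mul_one,
      Matrix.one_mul, ← Matrix.mul_assoc, hxw, hyw]
  have hMuu : (Pxu ⊗ₖ Pyu) * Luu
      = a1 • (Qxu ⊗ₖ Pyu) + a2 • (Pxu ⊗ₖ Qyu) - τuv • (Pxu ⊗ₖ vecMulVec (eNv lu) (eNv lu)) := by
    simp only [Luu, mul_add, mul_sub, Matrix.mul_smul, ← mul_kronecker_mul, Matrix.mul_one,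
      Matrix.one_mul, ← Matrix.mul_assoc, hxu, hyu]
  have hMvv : (Pxv ⊗ₖ Pyv) * Lvv
      = a1 • (Qxv ⊗ₖ Pyv) + a2 • (Pxv ⊗ₖ Qyv) - τuv • (Pxv ⊗ₖ vecMulVec (eNv lv) (eNv lv)) := by
    simp only [Lvv, mul_add, mul_sub, Matrix.mul_smul, ← mul_kronecker_mul, Matrix.mul_one,
      Matrix.one_mul, ← Matrix.mul_assoc, hxv, hyv]
  -- off-diagonal blocks of P * L
  have hMwu : (Pxw ⊗ₖ Pyw) * Lwu = τw • ((Iwuᵀ * Pxu) ⊗ₖ vecMulVec (e0v lw) (eNv lu)) := by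
    simp only [Lwu, hIwu', Matrix.mul_smul, ← mul_kronecker_mul, ← Matrix.mul_assoc, hxw, hyw,
      Matrix.one_mul]
  have hMwv : (Pxw ⊗ₖ Pyw) * Lwv = τw • ((Iwvᵀ * Pxv) ⊗ₖ vecMulVec (e0v lw) (eNv lv)) := by
    simp only [Lwv, hIwv', Matrix.mul_smul, ← mul_kronecker_mul, ← Matrix.mul_assoc, hxw, hyw,
      Matrix.one_mul]
  have hMuw : (Pxu ⊗ₖ Pyu) * Luw = τuv • ((Pxu * Iwu) ⊗ₖ vecMulVec (eNv lu) (e0v lw)) := by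
    simp only [Luw, Matrix.mul_smul, ← mul_kronecker_mul, ← Matrix.mul_assoc, hyu, Matrix.one_mul]
  have hMvw : (Pxv ⊗ₖ Pyv) * Lvw = τuv • ((Pxv * Iwv) ⊗ₖ vecMulVec (eNv lv) (e0v lw)) := by
    simp only [Lvw, Matrix.mul_smul, ← mul_kronecker_mul, ← Matrix.mul_assoc, hyv, Matrix.one_mul]
  have hτ : τw + τuv = 0 := by rw [hτw, hτuv]; ring
  -- skew-symmetry of the diagonal blocks
  have Hww : (Pxw ⊗ₖ Pyw) * Lww + ((Pxw ⊗ₖ Pyw) * Lww)ᵀ = 0 := by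
    rw [hMww]
    simp only [transpose_sub, transpose_add, transpose_smul, kron_transpose',
      vecMulVec_transpose', sxw, syw]
    have e1 : Qxw ⊗ₖ Pyw + Qxwᵀ ⊗ₖ Pyw = 0 := by rw [← add_kronecker, hQxw, zero_kronecker]
    have e2 : Pxw ⊗ₖ Qyw + Pxw ⊗ₖ Qywᵀ = -(Pxw ⊗ₖ vecMulVec (e0v lw) (e0v lw)) := by
      rw [← kronecker_add, hQyw, kron_neg']
    have key : a1 • (Qxw ⊗ₖ Pyw) + a2 • (Pxw ⊗ₖ Qyw)
          - τw • (Pxw ⊗ₖ vecMulVec (e0v lw) (e0v lw))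
        + (a1 • (Qxwᵀ ⊗ₖ Pyw) + a2 • (Pxw ⊗ₖ Qywᵀ)
          - τw • (Pxw ⊗ₖ vecMulVec (e0v lw) (e0v lw)))
        = a1 • (Qxw ⊗ₖ Pyw + Qxwᵀ ⊗ₖ Pyw) + a2 • (Pxw ⊗ₖ Qyw + Pxw ⊗ₖ Qywᵀ)
          - (τw + τw) • (Pxw ⊗ₖ vecMulVec (e0v lw) (e0v lw)) := by module
    rw [key, e1, e2, hτw]
    match_scalars
    ring
  have Huu : (Pxu ⊗ₖ Pyu) * Luu + ((Pxu ⊗ₖ Pyu) * Luu)ᵀ = 0 := by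
    rw [hMuu]
    simp only [transpose_sub, transpose_add, transpose_smul, kron_transpose',
      vecMulVec_transpose', sxu, syu]
    have e1 : Qxu ⊗ₖ Pyu + Qxuᵀ ⊗ₖ Pyu = 0 := by rw [← add_kronecker, hQxu, zero_kronecker]
    have e2 : Pxu ⊗ₖ Qyu + Pxu ⊗ₖ Qyuᵀ = Pxu ⊗ₖ vecMulVec (eNv lu) (eNv lu) := by
      rw [← kronecker_add, hQyu]
    have key : a1 • (Qxu ⊗ₖ Pyu) + a2 • (Pxu ⊗ₖ Qyu)
          - τuv • (Pxu ⊗ₖ vecMulVec (eNv lu) (eNv lu))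
        + (a1 • (Qxuᵀ ⊗ₖ Pyu) + a2 • (Pxu ⊗ₖ Qyuᵀ)
          - τuv • (Pxu ⊗ₖ vecMulVec (eNv lu) (eNv lu)))
        = a1 • (Qxu ⊗ₖ Pyu + Qxuᵀ ⊗ₖ Pyu) + a2 • (Pxu ⊗ₖ Qyu + Pxu ⊗ₖ Qyuᵀ)
          - (τuv + τuv) • (Pxu ⊗ₖ vecMulVec (eNv lu) (eNv lu)) := by module
    rw [key, e1, e2, hτuv]
    match_scalars
    ring
  have Hvv : (Pxv ⊗ₖ Pyv) * Lvv + ((Pxv ⊗ₖ Pyv) * Lvv)ᵀ = 0 := by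
    rw [hMvv]
    simp only [transpose_sub, transpose_add, transpose_smul, kron_transpose',
      vecMulVec_transpose', sxv, syv]
    have e1 : Qxv ⊗ₖ Pyv + Qxvᵀ ⊗ₖ Pyv = 0 := by rw [← add_kronecker, hQxv, zero_kronecker]
    have e2 : Pxv ⊗ₖ Qyv + Pxv ⊗ₖ Qyvᵀ = Pxv ⊗ₖ vecMulVec (eNv lv) (eNv lv) := by
      rw [← kronecker_add, hQyv]
    have key : a1 • (Qxv ⊗ₖ Pyv) + a2 • (Pxv ⊗ₖ Qyv)
          - τuv • (Pxv ⊗ₖ vecMulVec (eNv lv) (eNv lv))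
        + (a1 • (Qxvᵀ ⊗ₖ Pyv) + a2 • (Pxv ⊗ₖ Qyvᵀ)
          - τuv • (Pxv ⊗ₖ vecMulVec (eNv lv) (eNv lv)))
        = a1 • (Qxv ⊗ₖ Pyv + Qxvᵀ ⊗ₖ Pyv) + a2 • (Pxv ⊗ₖ Qyv + Pxv ⊗ₖ Qyvᵀ)
          - (τuv + τuv) • (Pxv ⊗ₖ vecMulVec (eNv lv) (eNv lv)) := by module
    rw [key, e1, e2, hτuv]
    match_scalars
    ring
  -- skew-symmetry of the off-diagonal blocks
  have Hwu : (Pxw ⊗ₖ Pyw) * Lwu + ((Pxu ⊗ₖ Pyu) * Luw)ᵀ = 0 := by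
    rw [hMwu, hMuw]
    simp only [transpose_smul, kron_transpose', vecMulVec_transpose', transpose_mul, sxu]
    rw [← add_smul, hτ, zero_smul]
  have Hwv : (Pxw ⊗ₖ Pyw) * Lwv + ((Pxv ⊗ₖ Pyv) * Lvw)ᵀ = 0 := by
    rw [hMwv, hMvw]
    simp only [transpose_smul, kron_transpose', vecMulVec_transpose', transpose_mul, sxv]
    rw [← add_smul, hτ, zero_smul]
  have Huw : (Pxu ⊗ₖ Pyu) * Luw + ((Pxw ⊗ₖ Pyw) * Lwu)ᵀ = 0 := by
    have := congrArg Matrix.transpose Hwu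
    simpa [transpose_add, add_comm] using this
  have Hvw : (Pxv ⊗ₖ Pyv) * Lvw + ((Pxw ⊗ₖ Pyw) * Lwv)ᵀ = 0 := by
    have := congrArg Matrix.transpose Hwv
    simpa [transpose_add, add_comm] using this
  -- assemble
  have hPL : P * L = fromBlocks ((Pxw ⊗ₖ Pyw) * Lww)
      (fromCols ((Pxw ⊗ₖ Pyw) * Lwu) ((Pxw ⊗ₖ Pyw) * Lwv))
      (fromRows ((Pxu ⊗ₖ Pyu) * Luw) ((Pxv ⊗ₖ Pyv) * Lvw))
      (fromBlocks ((Pxu ⊗ₖ Pyu) * Luu) 0 0 ((Pxv ⊗ₖ Pyv) * Lvv)) := by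
    simp only [P, L, fromBlocks_multiply, mul_fromCols, fromBlocks_mul_fromRows,
      Matrix.zero_mul, Matrix.mul_zero, add_zero, zero_add]
  rw [hLTP, hPL]
  simp only [fromBlocks_transpose, transpose_fromCols, transpose_fromRows, transpose_zero,
    fromBlocks_add, fromColumns_add', fromRows_add', Hww, Huu, Hvv, Hwu, Hwv, Huw, Hvw,
    add_zero, zero_add, fromCols_zero, fromRows_zero, fromBlocks_zero]

end
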